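/- Let B be a regular Bourgain system of dimension d on a finite abelian group G with associated uniform measure β on B₁, and f : G → ℂ. Then for all x ∈ G and y ∈ B_η, |f∗β(x+y) − f∗β(x)| ≤ 2⁴ ‖f‖_∞ d η, where (f∗β)(t) = ∫ f(t−u) dβ(u). -/

import Mathlib

open Finset

/-- A Bourgain system of dimension `d` on a finite abelian group `G`: a family
`(B ρ)_{ρ ∈ (0,2]}` of subsets satisfying nesting, containing `0`, symmetry, addition and
`2^d`-doubling. -/
def IsBourgainSystem {G : Type*} [AddCommGroup G] [Fintype G] (B : ℝ → Finset G) (d : ℝ) :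
    Prop :=
  (∀ ρ ρ' : ℝ, 0 < ρ' → ρ' ≤ ρ → ρ ≤ 2 → B ρ' ⊆ B ρ) ∧
  (∀ ρ : ℝ, 0 < ρ → ρ ≤ 2 → (0 : G) ∈ B ρ) ∧
  (∀ ρ : ℝ, 0 < ρ → ρ ≤ 2 → ∀ x ∈ B ρ, -x ∈ B ρ) ∧
  (∀ ρ ρ' : ℝ, 0 < ρ → 0 < ρ' → ρ + ρ' ≤ 1 →
    ∀ x ∈ B ρ, ∀ y ∈ B ρ', x + y ∈ B (ρ + ρ')) ∧
  (∀ ρ : ℝ, 0 < ρ → ρ ≤ 1 → ∃ X : Finset G, (X.card : ℝ) ≤ (2 : ℝ) ^ d ∧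
    ∀ y ∈ B (2 * ρ), ∃ x ∈ X, y - x ∈ B ρ)

/-- The density `μ_G(B) = μ_G(B₁)` of a Bourgain system. -/
noncomputable def bsDensity {G : Type*} [AddCommGroup G] [Fintype G] (B : ℝ → Finset G) : ℝ :=
  ((B 1).card : ℝ) / (Fintype.card G : ℝ)

/-- A Bourgain system of dimension `d` is regular if
`1 - 8d|η| ≤ μ_G(B₁)/μ_G(B_{1+η}) ≤ 1 + 8d|η|` whenever `d|η| ≤ 1/8`. -/
def IsRegularBS {G : Type*} [AddCommGroup G] [Fintype G] (B : ℝ → Finset G) (d : ℝ) : Prop :=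
  ∀ η : ℝ, d * |η| ≤ 1 / 8 →
    1 - 8 * d * |η| ≤ ((B 1).card : ℝ) / ((B (1 + η)).card : ℝ) ∧
    ((B 1).card : ℝ) / ((B (1 + η)).card : ℝ) ≤ 1 + 8 * d * |η|

/-- For a regular Bourgain system of dimension `d` with uniform measure `β` on `B₁` and any
`f : G → ℂ` bounded by `M`, if `y ∈ B_η` then `|f∗β(x+y) - f∗β(x)| ≤ 2⁴ M d η`. -/
theorem stmt9 {G : Type*} [AddCommGroup G] [Fintype G] (B : ℝ → Finset G) (d : ℝ)
    (hd : 1 ≤ d) (hB : IsBourgainSystem B d) (hreg : IsRegularBS B d)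
    (f : G → ℂ) (M : ℝ) (hM : ∀ z : G, ‖f z‖ ≤ M)
    (η : ℝ) (hη0 : 0 < η) (hη2 : η ≤ 2) (x y : G) (hy : y ∈ B η) :
    ‖(∑ u ∈ B 1, f (x + y - u)) / ((B 1).card : ℂ)
        - (∑ u ∈ B 1, f (x - u)) / ((B 1).card : ℂ)‖ ≤ 2 ^ 4 * M * d * η := by
  classical
  obtain ⟨hnest, hzero, hsym, hadd, -⟩ := hB
  have hM0 : 0 ≤ M := le_trans (norm_nonneg _) (hM 0)
  have h01 : (0:G) ∈ B 1 := hzero 1 one_pos one_le_two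
  have hn : 0 < (B 1).card := Finset.card_pos.2 ⟨0, h01⟩
  set n : ℝ := ((B 1).card : ℝ) with hn'
  have hnR : 0 < n := by rw [hn']; exact_mod_cast hn
  set g : G → ℂ := fun v => f (x - v) with hg
  set T : Finset G := B 1 with hT
  set S : Finset G := T.image (fun u => u - y) with hS
  have hinj : Function.Injective (fun u : G => u - y) := by
    intro a b h
    have h' : a - y = b - y := h
    have : a - y + y = b - y + y := by rw [h']
    simpa using this
  have hSsum : ∑ u ∈ T, f (x + y - u) = ∑ v ∈ S, g v := by
    rw [hS, Finset.sum_image (fun a _ b _ h => hinj h)]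
    refine Finset.sum_congr rfl fun u _ => ?_
    simp only [hg]
    congr 1
    abel
  have hScard : S.card = T.card := Finset.card_image_of_injective _ hinj
  -- bounds on sums by card * M
  have habs_sum : ∀ A : Finset G, ‖∑ v ∈ A, g v‖ ≤ (A.card : ℝ) * M := by
    intro A
    calc ‖∑ v ∈ A, g v‖ ≤ ∑ v ∈ A, ‖g v‖ := by
          exact norm_sum_le _ _
      _ ≤ ∑ _v ∈ A, M := Finset.sum_le_sum fun v _ => hM _
      _ = (A.card : ℝ) * M := by rw [Finset.sum_const, nsmul_eq_mul]
  have hdpos : 0 < d := lt_of_lt_of_le one_pos hd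
  rw [hSsum, div_sub_div_same]
  have habsdiv : ‖(∑ v ∈ S, g v - ∑ u ∈ T, f (x - u)) / ((B 1).card : ℂ)‖
      = ‖∑ v ∈ S, g v - ∑ v ∈ T, g v‖ / n := by
    rw [norm_div]
    congr 1
    simp [hn', hT]
  rw [habsdiv]
  rw [div_le_iff₀ hnR]
  by_cases hcase : d * η ≤ 1/8
  · -- main case
    have hη1 : η < 1 := by nlinarith
    have h1η : 0 < 1 - η := by linarith
    have hsub1 : B (1 - η) ⊆ T := hnest 1 (1-η) h1η (by linarith) one_le_two
    have hsub2 : B (1 - η) ⊆ S := by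
      intro u hu
      refine Finset.mem_image.2 ⟨u + y, ?_, by abel⟩
      have := hadd (1-η) η h1η hη0 (by linarith) u hu y hy
      rw [sub_add_cancel] at this
      exact this
    set m : ℝ := ((B (1-η)).card : ℝ) with hm'
    have hm0 : (0:G) ∈ B (1-η) := hzero _ h1η (by linarith)
    have hmpos : 0 < m := by
      have h0 : 0 < (B (1-η)).card := Finset.card_pos.2 ⟨0, hm0⟩
      rw [hm']; exact_mod_cast h0
    have hrg := (hreg (-η) (by rwa [abs_neg, abs_of_pos hη0])).2
    rw [abs_neg, abs_of_pos hη0] at hrg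
    have h1mη : (1 : ℝ) + -η = 1 - η := by ring
    rw [h1mη] at hrg
    have hmn : m ≤ n := by rw [hm', hn']; exact_mod_cast Finset.card_le_card hsub1
    have hnm : n - m ≤ 8 * d * η * n := by
      rw [div_le_iff₀ hmpos] at hrg
      nlinarith
    -- card bounds on symmetric differences
    have hSdT : ((S \ T).card : ℝ) ≤ n - m := by
      have h1 : B (1-η) ⊆ S ∩ T := Finset.subset_inter hsub2 hsub1
      have h2 : (S \ T).card + (S ∩ T).card = S.card :=
        Finset.card_sdiff_add_card_inter S T
      have h3 : (B (1-η)).card ≤ (S ∩ T).card := Finset.card_le_card h1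
      have h4 : S.card = (B 1).card := hScard
      have h5 : ((S \ T).card : ℝ) + ((S ∩ T).card : ℝ) = n := by
        rw [hn', ← h4]; exact_mod_cast h2
      have h6 : m ≤ ((S ∩ T).card : ℝ) := by rw [hm']; exact_mod_cast h3
      linarith
    have hTdS : ((T \ S).card : ℝ) ≤ n - m := by
      have h1 : B (1-η) ⊆ T ∩ S := Finset.subset_inter hsub1 hsub2
      have h2 : (T \ S).card + (T ∩ S).card = T.card :=
        Finset.card_sdiff_add_card_inter T S
      have h3 : (B (1-η)).card ≤ (T ∩ S).card := Finset.card_le_card h1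
      have h5 : ((T \ S).card : ℝ) + ((T ∩ S).card : ℝ) = n := by
        rw [hn']; exact_mod_cast h2
      have h6 : m ≤ ((T ∩ S).card : ℝ) := by rw [hm']; exact_mod_cast h3
      linarith
    have hkey : ∑ v ∈ S, g v - ∑ v ∈ T, g v = ∑ v ∈ S \ T, g v - ∑ v ∈ T \ S, g v := by
      have e1 : ∑ v ∈ S ∩ T, g v + ∑ v ∈ S \ T, g v = ∑ v ∈ S, g v :=
        Finset.sum_inter_add_sum_sdiff S T g
      have e2 : ∑ v ∈ T ∩ S, g v + ∑ v ∈ T \ S, g v = ∑ v ∈ T, g v :=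
        Finset.sum_inter_add_sum_sdiff T S g
      rw [Finset.inter_comm] at e2
      linear_combination e2 - e1
    rw [hkey]
    calc ‖∑ v ∈ S \ T, g v - ∑ v ∈ T \ S, g v‖
        ≤ ‖∑ v ∈ S \ T, g v‖ + ‖∑ v ∈ T \ S, g v‖ := by
          exact norm_sub_le _ _
      _ ≤ ((S \ T).card : ℝ) * M + ((T \ S).card : ℝ) * M := by
          exact add_le_add (habs_sum _) (habs_sum _)
      _ ≤ (n - m) * M + (n - m) * M := by
          exact add_le_add (mul_le_mul_of_nonneg_right hSdT hM0)
            (mul_le_mul_of_nonneg_right hTdS hM0)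
      _ ≤ (8 * d * η * n) * M + (8 * d * η * n) * M := by
          have := mul_le_mul_of_nonneg_right hnm hM0
          linarith
      _ = 2 ^ 4 * M * d * η * n := by ring
  · -- trivial case: d * η > 1/8
    push_neg at hcase
    calc ‖∑ v ∈ S, g v - ∑ v ∈ T, g v‖
        ≤ ‖∑ v ∈ S, g v‖ + ‖∑ v ∈ T, g v‖ :=
          norm_sub_le _ _
      _ ≤ (S.card : ℝ) * M + (T.card : ℝ) * M := add_le_add (habs_sum _) (habs_sum _)
      _ = 2 * M * n := by rw [hScard]; simp [hn']; ring
      _ ≤ 2 ^ 4 * M * d * η * n := by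
          have h2M : 2 * M ≤ 2 ^ 4 * M * d * η := by
            nlinarith [mul_le_mul_of_nonneg_left hcase.le hM0]
          exact mul_le_mul_of_nonneg_right h2M hnR.le
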